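/- The two Borel subalgebras b₊ and b₋ of gl(n+1)⊕t_{n+1} are isotropic with respect to the pairing ⟨z^i, Z_j⟩ = δ^i_j, ⟨z^{ij}, Z_{kl}⟩ = δ^i_kδ^j_l (all other pairings zero), they intersect trivially, and b₊ + b₋ = gl(n+1)⊕t_{n+1} as vector spaces (so dim b₊ = dim b₋ = (n+1)(n+2)/2). -/

import Mathlib

/-- The algebra `gl(n+1) ⊕ t_{n+1}` (see STATEMENT 18). -/
abbrev glPlusT (n : ℕ) := Matrix (Fin (n+1)) (Fin (n+1)) ℂ × (Fin (n+1) → ℂ)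

/-- `H_i = E_{ii}`. -/
noncomputable def Hgen (n : ℕ) (i : Fin (n+1)) : glPlusT n :=
  (Matrix.single i i 1, 0)

/-- `F_{ij} = E_{ij}` (`i ≠ j`). -/
noncomputable def Fgen (n : ℕ) (i j : Fin (n+1)) : glPlusT n :=
  (Matrix.single i j 1, 0)

/-- The central generators `I_i` of the abelian algebra `t_{n+1}`. -/
noncomputable def Igen (n : ℕ) (i : Fin (n+1)) : glPlusT n :=
  (0, Pi.single i 1)

/-- `Z_i = (H_i + i I_i)/√2`. -/
noncomputable def Zgen (n : ℕ) (i : Fin (n+1)) : glPlusT n :=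
  ((Real.sqrt 2 : ℂ))⁻¹ • (Hgen n i + Complex.I • Igen n i)

/-- `z^i = (H_i − i I_i)/√2`. -/
noncomputable def zgen (n : ℕ) (i : Fin (n+1)) : glPlusT n :=
  ((Real.sqrt 2 : ℂ))⁻¹ • (Hgen n i - Complex.I • Igen n i)

/-- The set `b₊ = span{Z_i, Z_{ij} = F_{ij} (i<j)}`. -/
def BplusSet (n : ℕ) : Set (glPlusT n) :=
  Set.range (Zgen n) ∪ {x | ∃ i j : Fin (n+1), i < j ∧ x = Fgen n i j}

/-- The set `b₋ = span{z^i, z^{ij} = F_{ji} (i<j)}`. -/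
def BminusSet (n : ℕ) : Set (glPlusT n) :=
  Set.range (zgen n) ∪ {x | ∃ i j : Fin (n+1), i < j ∧ x = Fgen n j i}

/-- The invariant pairing on `gl(n+1) ⊕ t_{n+1}` realizing
`⟨z^i,Z_j⟩ = δ^i_j`, `⟨z^{ij},Z_{kl}⟩ = δ^i_kδ^j_l`, all other pairings of the
`b₋` and `b₊` basis elements being zero. -/
noncomputable def glPairing (n : ℕ) (x y : glPlusT n) : ℂ :=
  Matrix.trace (x.1 * y.1) + ∑ i, x.2 i * y.2 i

noncomputable def glB (n : ℕ) : glPlusT n →ₗ[ℂ] glPlusT n →ₗ[ℂ] ℂ :=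
  LinearMap.mk₂ ℂ (glPairing n)
    (fun x x' y => by simp [glPairing, Matrix.add_mul, Finset.sum_add_distrib, add_mul]; ring)
    (fun c x y => by simp [glPairing, Matrix.smul_mul, Finset.mul_sum, mul_assoc, mul_add])
    (fun x y y' => by simp [glPairing, Matrix.mul_add, Finset.sum_add_distrib, mul_add]; ring)
    (fun c x y => by simp [glPairing, Matrix.mul_smul, Finset.mul_sum, mul_left_comm, mul_add])
lemma glB_apply (n : ℕ) (x y : glPlusT n) : glB n x y = glPairing n x y := rfl
lemma gFF (n : ℕ) (a b c d : Fin (n+1)) :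
    glB n (Fgen n a b) (Fgen n c d) = if b = c ∧ a = d then 1 else 0 := by
  simp only [glB_apply, glPairing, Fgen]
  simp [Matrix.trace, Matrix.mul_apply, Matrix.single, Matrix.diag, ite_and, Finset.sum_ite_eq]
  aesop
lemma gFI (n : ℕ) (a b c : Fin (n+1)) : glB n (Fgen n a b) (Igen n c) = 0 := by
  simp [glB_apply, glPairing, Fgen, Igen]
lemma gIF (n : ℕ) (a b c : Fin (n+1)) : glB n (Igen n a) (Fgen n b c) = 0 := by
  simp [glB_apply, glPairing, Fgen, Igen]
lemma gII (n : ℕ) (a b : Fin (n+1)) :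
    glB n (Igen n a) (Igen n b) = if a = b then 1 else 0 := by
  simp only [glB_apply, glPairing, Igen]
  simp [Pi.single_apply, ite_and, Finset.sum_ite_eq, eq_comm]
lemma Hgen_eq (n : ℕ) (i : Fin (n+1)) : Hgen n i = Fgen n i i := rfl
lemma sqrt2_mul_self : ((Real.sqrt 2 : ℝ) : ℂ) * ((Real.sqrt 2 : ℝ) : ℂ) = 2 := by
  rw [← Complex.ofReal_mul]; norm_num [Real.mul_self_sqrt]
lemma inv_sqrt2_sq : ((Real.sqrt 2 : ℝ) : ℂ)⁻¹ * ((Real.sqrt 2 : ℝ) : ℂ)⁻¹ = 2⁻¹ := by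
  rw [← mul_inv, sqrt2_mul_self]
lemma pzZ (n : ℕ) (i j : Fin (n+1)) :
    glB n (zgen n i) (Zgen n j) = if i = j then 1 else 0 := by
  simp only [zgen, Zgen, map_smul, map_sub, map_add, LinearMap.smul_apply, LinearMap.sub_apply,
    LinearMap.add_apply, smul_eq_mul, Hgen_eq, gFF, gFI, gIF, gII]
  rcases eq_or_ne i j with h | h
  · simp only [h, and_self, if_true]
    linear_combination (1 - Complex.I*Complex.I) * inv_sqrt2_sq - (2:ℂ)⁻¹ * Complex.I_mul_I
  · simp [h]
lemma pZZ (n : ℕ) (i j : Fin (n+1)) : glB n (Zgen n i) (Zgen n j) = 0 := by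
  simp only [Zgen, map_smul, map_add, LinearMap.smul_apply,
    LinearMap.add_apply, smul_eq_mul, Hgen_eq, gFF, gFI, gIF, gII]
  rcases eq_or_ne i j with h | h
  · simp only [h, and_self, if_true]
    linear_combination (1 + Complex.I*Complex.I) * inv_sqrt2_sq + (2:ℂ)⁻¹ * Complex.I_mul_I
  · simp [h]
lemma pzz (n : ℕ) (i j : Fin (n+1)) : glB n (zgen n i) (zgen n j) = 0 := by
  simp only [zgen, map_smul, map_sub, LinearMap.smul_apply,
    LinearMap.sub_apply, smul_eq_mul, Hgen_eq, gFF, gFI, gIF, gII]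
  rcases eq_or_ne i j with h | h
  · simp only [h, and_self, if_true]
    linear_combination (1 + Complex.I*Complex.I) * inv_sqrt2_sq + (2:ℂ)⁻¹ * Complex.I_mul_I
  · simp [h]
lemma pZF (n : ℕ) (i k l : Fin (n+1)) (h : k ≠ l) : glB n (Zgen n i) (Fgen n k l) = 0 := by
  simp only [Zgen, map_smul, map_add, LinearMap.smul_apply, LinearMap.add_apply, smul_eq_mul,
    Hgen_eq, gFF, gIF]
  have : ¬ (i = k ∧ i = l) := by rintro ⟨rfl, rfl⟩; exact h rfl
  simp [this]
lemma pFZ (n : ℕ) (i k l : Fin (n+1)) (h : k ≠ l) : glB n (Fgen n k l) (Zgen n i) = 0 := by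
  simp only [Zgen, map_smul, map_add, LinearMap.smul_apply, LinearMap.add_apply, smul_eq_mul,
    Hgen_eq, gFF, gFI]
  have : ¬ (l = i ∧ k = i) := by rintro ⟨rfl, rfl⟩; exact h rfl
  simp [this]
lemma pzF (n : ℕ) (i k l : Fin (n+1)) (h : k ≠ l) : glB n (zgen n i) (Fgen n k l) = 0 := by
  simp only [zgen, map_smul, map_sub, LinearMap.smul_apply, LinearMap.sub_apply, smul_eq_mul,
    Hgen_eq, gFF, gIF]
  have : ¬ (i = k ∧ i = l) := by rintro ⟨rfl, rfl⟩; exact h rfl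
  simp [this]
lemma pFz (n : ℕ) (i k l : Fin (n+1)) (h : k ≠ l) : glB n (Fgen n k l) (zgen n i) = 0 := by
  simp only [zgen, map_smul, map_sub, LinearMap.smul_apply, LinearMap.sub_apply, smul_eq_mul,
    Hgen_eq, gFF, gFI]
  have : ¬ (l = i ∧ k = i) := by rintro ⟨rfl, rfl⟩; exact h rfl
  simp [this]

lemma span_pairing_zero {n : ℕ} {S T : Set (glPlusT n)}
    (h : ∀ a ∈ S, ∀ b ∈ T, glB n a b = 0) :
    ∀ x ∈ Submodule.span ℂ S, ∀ y ∈ Submodule.span ℂ T, glB n x y = 0 := by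
  intro x hx y hy
  have h1 : ∀ a ∈ S, glB n a y = 0 := fun a ha => by
    have hle : Submodule.span ℂ T ≤ LinearMap.ker (glB n a) :=
      Submodule.span_le.2 fun b hb => LinearMap.mem_ker.2 (h a ha b hb)
    exact hle hy
  have hle : Submodule.span ℂ S ≤ LinearMap.ker ((glB n).flip y) :=
    Submodule.span_le.2 fun a ha => LinearMap.mem_ker.2 (h1 a ha)
  exact hle hx
noncomputable def BunionSpan (n : ℕ) : Submodule ℂ (glPlusT n) :=
  Submodule.span ℂ (BplusSet n ∪ BminusSet n)

lemma sqrt2_ne : ((Real.sqrt 2 : ℝ) : ℂ) ≠ 0 := by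
  simp [Real.sqrt_eq_zero']

lemma Hgen_mem (n : ℕ) (i : Fin (n+1)) : Hgen n i ∈ BunionSpan n := by
  have hZ : Zgen n i ∈ BunionSpan n :=
    Submodule.subset_span (Or.inl (Or.inl ⟨i, rfl⟩))
  have hz : zgen n i ∈ BunionSpan n :=
    Submodule.subset_span (Or.inr (Or.inl ⟨i, rfl⟩))
  have key : Hgen n i = ((2:ℂ))⁻¹ • (((Real.sqrt 2:ℝ):ℂ)) • (Zgen n i + zgen n i) := by
    rw [Zgen, zgen, ← smul_add]
    have h2 : (Hgen n i + Complex.I • Igen n i) + (Hgen n i - Complex.I • Igen n i)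
        = (2:ℂ) • Hgen n i := by module
    rw [h2, smul_smul, smul_smul, smul_smul]
    rw [show ((2:ℂ))⁻¹ * ((Real.sqrt 2:ℝ):ℂ) * (((Real.sqrt 2:ℝ):ℂ))⁻¹ * 2 = 1 by
      field_simp, one_smul]
  rw [key]
  exact Submodule.smul_mem _ _ (Submodule.smul_mem _ _ (add_mem hZ hz))

lemma Igen_mem (n : ℕ) (i : Fin (n+1)) : Igen n i ∈ BunionSpan n := by
  have hZ : Zgen n i ∈ BunionSpan n :=
    Submodule.subset_span (Or.inl (Or.inl ⟨i, rfl⟩))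
  have hz : zgen n i ∈ BunionSpan n :=
    Submodule.subset_span (Or.inr (Or.inl ⟨i, rfl⟩))
  have key : Igen n i
      = ((2:ℂ)*Complex.I)⁻¹ • (((Real.sqrt 2:ℝ):ℂ)) • (Zgen n i - zgen n i) := by
    rw [Zgen, zgen, ← smul_sub]
    have h2 : (Hgen n i + Complex.I • Igen n i) - (Hgen n i - Complex.I • Igen n i)
        = ((2:ℂ)*Complex.I) • Igen n i := by module
    rw [h2, smul_smul, smul_smul, smul_smul]
    rw [show ((2:ℂ)*Complex.I)⁻¹ * ((Real.sqrt 2:ℝ):ℂ) * (((Real.sqrt 2:ℝ):ℂ))⁻¹ * ((2:ℂ)*Complex.I) = 1 by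
      field_simp, one_smul]
  rw [key]
  exact Submodule.smul_mem _ _ (Submodule.smul_mem _ _ (sub_mem hZ hz))

lemma Fgen_mem (n : ℕ) (i j : Fin (n+1)) : Fgen n i j ∈ BunionSpan n := by
  rcases lt_trichotomy i j with h | h | h
  · exact Submodule.subset_span (Or.inl (Or.inr ⟨i, j, h, rfl⟩))
  · subst h; exact Hgen_mem n i
  · exact Submodule.subset_span (Or.inr (Or.inr ⟨j, i, h, rfl⟩))

lemma decomp (n : ℕ) (x : glPlusT n) :
    x = (∑ i, ∑ j, x.1 i j • Fgen n i j)
        + ∑ i, x.2 i • Igen n i := by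
  apply Prod.ext
  · simp only [Prod.fst_add, Prod.fst_sum, Prod.smul_fst, Fgen, Igen, smul_zero,
      Finset.sum_const_zero, add_zero, Matrix.smul_single, smul_eq_mul, mul_one]
    exact Matrix.matrix_eq_sum_single x.1
  · simp only [Prod.snd_add, Prod.snd_sum, Prod.smul_snd, Fgen, Igen, smul_zero,
      Finset.sum_const_zero, zero_add]
    have : ∀ i, x.2 i • (Pi.single i (1:ℂ) : Fin (n+1) → ℂ) = Pi.single i (x.2 i) := by
      intro i; rw [← Pi.single_smul]; simp
    simp only [this]
    exact (Finset.univ_sum_single x.2).symm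

lemma union_span_top (n : ℕ) : BunionSpan n = ⊤ := by
  rw [eq_top_iff]
  intro x _
  rw [decomp n x]
  exact add_mem
    (Submodule.sum_mem _ fun i _ => Submodule.sum_mem _ fun j _ =>
      Submodule.smul_mem _ _ (Fgen_mem n i j))
    (Submodule.sum_mem _ fun i _ => Submodule.smul_mem _ _ (Igen_mem n i))

lemma card_pairs (n : ℕ) :
    Fintype.card {p : Fin (n+1) × Fin (n+1) // p.1 ≤ p.2} = (n+1)*(n+2)/2 := by
  rw [← Fintype.card_congr (Sym2.sortEquiv (α := Fin (n+1)))]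
  rw [Sym2.card, Fintype.card_fin, Nat.choose_two_right]
  congr 1
  rw [show n+1+1-1 = n+1 from rfl]
  ring

lemma finrank_span_plus_le (n : ℕ) :
    Module.finrank ℂ (Submodule.span ℂ (BplusSet n)) ≤ (n+1)*(n+2)/2 := by
  classical
  set g : {p : Fin (n+1) × Fin (n+1) // p.1 ≤ p.2} → glPlusT n :=
    fun p => if p.1.1 = p.1.2 then Zgen n p.1.1 else Fgen n p.1.1 p.1.2 with hg
  have hsub : BplusSet n ⊆ Set.range g := by
    rintro x (⟨i, rfl⟩ | ⟨i, j, hij, rfl⟩)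
    · exact ⟨⟨(i,i), le_rfl⟩, by simp [hg]⟩
    · exact ⟨⟨(i,j), le_of_lt hij⟩, by simp [hg, ne_of_lt hij]⟩
  have h1 : Module.finrank ℂ (Submodule.span ℂ (BplusSet n))
      ≤ Module.finrank ℂ (Submodule.span ℂ (Set.range g)) :=
    Submodule.finrank_mono (Submodule.span_mono hsub)
  have h2 : Set.range g = ((Finset.univ.image g : Finset (glPlusT n)) : Set (glPlusT n)) := by
    simp
  have h3 : Module.finrank ℂ (Submodule.span ℂ (Set.range g))
      ≤ (Finset.univ.image g).card := by
    rw [h2]; exact finrank_span_finset_le_card _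
  calc Module.finrank ℂ (Submodule.span ℂ (BplusSet n)) ≤ (Finset.univ.image g).card :=
        le_trans h1 h3
    _ ≤ Fintype.card {p : Fin (n+1) × Fin (n+1) // p.1 ≤ p.2} := by
        exact Finset.card_image_le.trans_eq Finset.card_univ
    _ = (n+1)*(n+2)/2 := card_pairs n

lemma finrank_span_minus_le (n : ℕ) :
    Module.finrank ℂ (Submodule.span ℂ (BminusSet n)) ≤ (n+1)*(n+2)/2 := by
  classical
  set g : {p : Fin (n+1) × Fin (n+1) // p.1 ≤ p.2} → glPlusT n :=
    fun p => if p.1.1 = p.1.2 then zgen n p.1.1 else Fgen n p.1.2 p.1.1 with hg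
  have hsub : BminusSet n ⊆ Set.range g := by
    rintro x (⟨i, rfl⟩ | ⟨i, j, hij, rfl⟩)
    · exact ⟨⟨(i,i), le_rfl⟩, by simp [hg]⟩
    · exact ⟨⟨(i,j), le_of_lt hij⟩, by simp [hg, ne_of_lt hij]⟩
  have h1 : Module.finrank ℂ (Submodule.span ℂ (BminusSet n))
      ≤ Module.finrank ℂ (Submodule.span ℂ (Set.range g)) :=
    Submodule.finrank_mono (Submodule.span_mono hsub)
  have h2 : Set.range g = ((Finset.univ.image g : Finset (glPlusT n)) : Set (glPlusT n)) := by
    simp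
  have h3 : Module.finrank ℂ (Submodule.span ℂ (Set.range g))
      ≤ (Finset.univ.image g).card := by
    rw [h2]; exact finrank_span_finset_le_card _
  calc Module.finrank ℂ (Submodule.span ℂ (BminusSet n)) ≤ (Finset.univ.image g).card :=
        le_trans h1 h3
    _ ≤ Fintype.card {p : Fin (n+1) × Fin (n+1) // p.1 ≤ p.2} := by
        exact Finset.card_image_le.trans_eq Finset.card_univ
    _ = (n+1)*(n+2)/2 := card_pairs n

lemma finrank_total (n : ℕ) : Module.finrank ℂ (glPlusT n) = (n+1)*(n+2) := by
  rw [Module.finrank_prod, Module.finrank_matrix, Module.finrank_pi]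
  simp [Fintype.card_fin]; ring

/-- the Borel subalgebras `b₊` and `b₋` of `gl(n+1) ⊕ t_{n+1}`
are isotropic for the pairing (which is the stated dual pairing on the basis),
intersect trivially, and sum to the whole space; both have dimension
`(n+1)(n+2)/2`. -/
theorem gl_borel_isotropic_complementary (n : ℕ) :
    (∀ i j, glPairing n (zgen n i) (Zgen n j) = if i = j then 1 else 0)
    ∧ (∀ i j k l : Fin (n+1), i < j → k < l →
        glPairing n (Fgen n j i) (Fgen n k l) = if i = k ∧ j = l then 1 else 0)
    ∧ (∀ x ∈ Submodule.span ℂ (BplusSet n), ∀ y ∈ Submodule.span ℂ (BplusSet n),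
        glPairing n x y = 0)
    ∧ (∀ x ∈ Submodule.span ℂ (BminusSet n), ∀ y ∈ Submodule.span ℂ (BminusSet n),
        glPairing n x y = 0)
    ∧ Submodule.span ℂ (BplusSet n) ⊓ Submodule.span ℂ (BminusSet n) = ⊥
    ∧ Submodule.span ℂ (BplusSet n) ⊔ Submodule.span ℂ (BminusSet n) = ⊤
    ∧ Module.finrank ℂ (Submodule.span ℂ (BplusSet n)) = (n+1)*(n+2)/2
    ∧ Module.finrank ℂ (Submodule.span ℂ (BminusSet n)) = (n+1)*(n+2)/2 := by
  have hplus : ∀ a ∈ BplusSet n, ∀ b ∈ BplusSet n, glB n a b = 0 := by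
    rintro a (⟨i, rfl⟩ | ⟨i, j, hij, rfl⟩) b (⟨k, rfl⟩ | ⟨k, l, hkl, rfl⟩)
    · exact pZZ n i k
    · exact pZF n i k l (ne_of_lt hkl)
    · exact pFZ n k i j (ne_of_lt hij)
    · rw [gFF]
      rw [if_neg]
      rintro ⟨rfl, rfl⟩
      exact absurd (lt_trans hij hkl) (lt_irrefl _)
  have hminus : ∀ a ∈ BminusSet n, ∀ b ∈ BminusSet n, glB n a b = 0 := by
    rintro a (⟨i, rfl⟩ | ⟨i, j, hij, rfl⟩) b (⟨k, rfl⟩ | ⟨k, l, hkl, rfl⟩)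
    · exact pzz n i k
    · exact pzF n i l k (ne_of_lt hkl).symm
    · exact pFz n k j i (ne_of_lt hij).symm
    · rw [gFF]
      rw [if_neg]
      rintro ⟨rfl, rfl⟩
      exact absurd (lt_trans hkl hij) (lt_irrefl _)
  have hsup : Submodule.span ℂ (BplusSet n) ⊔ Submodule.span ℂ (BminusSet n) = ⊤ := by
    rw [← Submodule.span_union]
    exact union_span_top n
  set D := (n+1)*(n+2)/2 with hD
  have h2d : 2*D = (n+1)*(n+2) := by
    obtain ⟨r, hr⟩ := Nat.even_mul_succ_self (n+1)
    rw [hD]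
    rw [show (n+1)*(n+1+1) = (n+1)*(n+2) from rfl] at hr
    omega
  have heq := Submodule.finrank_sup_add_finrank_inf_eq
    (Submodule.span ℂ (BplusSet n)) (Submodule.span ℂ (BminusSet n))
  rw [hsup, finrank_top, finrank_total, ← h2d] at heq
  have hP := finrank_span_plus_le n
  have hQ := finrank_span_minus_le n
  rw [← hD] at hP hQ
  refine ⟨fun i j => pzZ n i j, fun i j k l _ _ => gFF n j i k l,
    span_pairing_zero hplus, span_pairing_zero hminus, ?_, hsup, by omega, by omega⟩
  have hinf : Module.finrank ℂ
      ↥(Submodule.span ℂ (BplusSet n) ⊓ Submodule.span ℂ (BminusSet n)) = 0 := by omega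
  exact Submodule.finrank_eq_zero.mp hinf
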